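/- Let X_1, ..., X_n be random variables with X_k ∈ [−A, A] almost surely and E[X_k | X_1, ..., X_{k-1}, X_{k+1}, ..., X_n] ≤ α almost surely, and let Y_1, ..., Y_n be random variables with Y_k ∈ (0, B] almost surely and E[Y_k | all other X's and Y's] = β almost surely, where α < β. Then P(Σ_{k=1}^n X_k − Σ_{k=1}^n Y_k ≥ 0) ≤ exp(−(1/2)((β−α)/(A+B))² n). -/

import Mathlib

open MeasureTheory

/-- Scalar inequality: `(1-r)e^r + (1+r)e^{-r} ≤ 2 - r²` for `r ≥ 0`
(equivalent to `cosh r - r sinh r ≤ 1 - r²/2`). -/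
lemma chord_scalar (r : ℝ) (hr : 0 ≤ r) :
    (1 - r) * Real.exp r + (1 + r) * Real.exp (-r) ≤ 2 - r ^ 2 := by
  have key : ∀ x ∈ Set.Ici (0:ℝ), HasDerivAt
      (fun y : ℝ => (2 - y ^ 2) - ((1 - y) * Real.exp y + (1 + y) * Real.exp (-y)))
      (x * (Real.exp x + Real.exp (-x) - 2)) x := by
    intro x _
    have h1 : HasDerivAt (fun y : ℝ => (1 - y) * Real.exp y) (-x * Real.exp x) x := by
      have := ((hasDerivAt_id x).const_sub 1).mul (Real.hasDerivAt_exp x)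
      refine this.congr_deriv ?_; simp only [id]; ring
    have h2 : HasDerivAt (fun y : ℝ => (1 + y) * Real.exp (-y)) (-x * Real.exp (-x)) x := by
      have he : HasDerivAt (fun y : ℝ => Real.exp (-y)) (-Real.exp (-x)) x := by
        have := (Real.hasDerivAt_exp (-x)).comp x ((hasDerivAt_id x).neg)
        refine this.congr_deriv ?_; ring
      have := ((hasDerivAt_id x).const_add 1).mul he
      refine this.congr_deriv ?_; simp only [id]; ring
    have h3 : HasDerivAt (fun y : ℝ => (2 : ℝ) - y ^ 2) (-(2 * x)) x := by
      have := (hasDerivAt_pow 2 x).const_sub 2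
      refine this.congr_deriv ?_; norm_num
    have := h3.sub (h1.add h2)
    refine this.congr_deriv ?_; ring
  have hmono : MonotoneOn
      (fun y : ℝ => (2 - y ^ 2) - ((1 - y) * Real.exp y + (1 + y) * Real.exp (-y)))
      (Set.Ici 0) := by
    apply monotoneOn_of_deriv_nonneg (convex_Ici 0)
    · exact Continuous.continuousOn (by continuity)
    · intro x hx
      exact ((key x (interior_subset hx)).differentiableAt).differentiableWithinAt
    · intro x hx
      rw [(key x (interior_subset hx)).deriv]
      have hx0 : 0 ≤ x := le_of_lt (by simpa using hx)
      have hmul : Real.exp x * Real.exp (-x) = 1 := by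
        rw [← Real.exp_add]; simp
      have : 2 ≤ Real.exp x + Real.exp (-x) := by
        nlinarith [Real.exp_pos x, Real.exp_pos (-x), hmul, sq_nonneg (Real.exp x - 1)]
      nlinarith
  have h0 := hmono (Set.self_mem_Ici) (Set.mem_Ici.mpr hr) hr
  simp only [neg_zero, Real.exp_zero] at h0
  nlinarith [h0]

/-- Bounded a.e. measurable functions are integrable on a finite measure space. -/
lemma integrable_of_ae_bdd {Ω : Type*} [MeasurableSpace Ω] {μ : Measure Ω} [IsFiniteMeasure μ]
    {f : Ω → ℝ} (hf : AEStronglyMeasurable f μ) {C : ℝ} (h : ∀ᵐ ω ∂μ, |f ω| ≤ C) :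
    Integrable f μ :=
  Integrable.mono' (integrable_const C) hf (by filter_upwards [h] with ω hω; simpa using hω)

theorem stmt_11 {Ω : Type*} [MeasurableSpace Ω] (μ : Measure Ω) [IsProbabilityMeasure μ]
    (n : ℕ) (X Y : Fin n → Ω → ℝ)
    (hXmeas : ∀ k, Measurable (X k)) (hYmeas : ∀ k, Measurable (Y k))
    (A B α β : ℝ) (hA : 0 < A) (hB : 0 < B) (hαβ : α < β)
    (hXbdd : ∀ k, ∀ᵐ ω ∂μ, X k ω ∈ Set.Icc (-A) A)
    (hXcond : ∀ k, ∀ᵐ ω ∂μ,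
      (μ[X k |
        (⨆ (j : Fin n) (_ : j ≠ k), MeasurableSpace.comap (X j) inferInstance) ⊔
        (⨆ j : Fin n, MeasurableSpace.comap (Y j) inferInstance)]) ω ≤ α)
    (hYbdd : ∀ k, ∀ᵐ ω ∂μ, 0 < Y k ω ∧ Y k ω ≤ B)
    (hYcond : ∀ k,
      μ[Y k |
        (⨆ j : Fin n, MeasurableSpace.comap (X j) inferInstance) ⊔
        (⨆ (j : Fin n) (_ : j ≠ k), MeasurableSpace.comap (Y j) inferInstance)]
        =ᵐ[μ] fun _ => β) :
    (μ {ω | 0 ≤ (∑ k, X k ω) - ∑ k, Y k ω}).toReal ≤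
      Real.exp (-(1 / 2) * ((β - α) / (A + B)) ^ 2 * n) := by
  classical
  set c := A + B with hc_def
  have hc0 : 0 < c := by positivity
  set δ := β - α with hδ_def
  have hδ0 : 0 < δ := sub_pos.mpr hαβ
  set r := δ / c with hr_def
  have hr0 : 0 < r := by positivity
  set lam := δ / c ^ 2 with hlam_def
  have hlam0 : 0 < lam := by positivity
  have hlamc : lam * c = r := by
    rw [hlam_def, hr_def]; field_simp
  set K := Real.exp (-(1/2) * r ^ 2) with hK_def
  have hK0 : 0 < K := Real.exp_pos _
  -- the differences
  set D : Fin n → Ω → ℝ := fun k ω => X k ω - Y k ω with hD_def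
  have hDmeas : ∀ k, Measurable (D k) := fun k => (hXmeas k).sub (hYmeas k)
  have hDbdd : ∀ k, ∀ᵐ ω ∂μ, |D k ω| ≤ c := by
    intro k
    filter_upwards [hXbdd k, hYbdd k] with ω hX hY
    rw [hD_def, abs_le]
    constructor <;> simp only <;> [linarith [hX.1, hY.2]; linarith [hX.2, hY.1]]
  have hDint : ∀ k, Integrable (D k) μ := fun k =>
    integrable_of_ae_bdd (hDmeas k).aestronglyMeasurable (hDbdd k)
  have hXint : ∀ k, Integrable (X k) μ := by
    intro k
    refine integrable_of_ae_bdd (hXmeas k).aestronglyMeasurable (C := A) ?_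
    filter_upwards [hXbdd k] with ω hX
    rw [abs_le]; exact ⟨hX.1, hX.2⟩
  have hYint : ∀ k, Integrable (Y k) μ := by
    intro k
    refine integrable_of_ae_bdd (hYmeas k).aestronglyMeasurable (C := B) ?_
    filter_upwards [hYbdd k] with ω hY
    rw [abs_le]; exact ⟨by linarith [hY.1], hY.2⟩
  -- the exp factors
  have hexpDmeas : ∀ k, Measurable (fun ω => Real.exp (lam * D k ω)) :=
    fun k => Real.measurable_exp.comp ((hDmeas k).const_mul lam)
  have hexpDbdd : ∀ k, ∀ᵐ ω ∂μ, |Real.exp (lam * D k ω)| ≤ Real.exp (lam * c) := by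
    intro k
    filter_upwards [hDbdd k] with ω hω
    rw [abs_of_pos (Real.exp_pos _)]
    exact Real.exp_le_exp.mpr (mul_le_mul_of_nonneg_left (le_of_abs_le hω) hlam0.le)
  have hexpDint : ∀ k, Integrable (fun ω => Real.exp (lam * D k ω)) μ :=
    fun k => integrable_of_ae_bdd (hexpDmeas k).aestronglyMeasurable (hexpDbdd k)
  -- the filtration
  set F : ℕ → MeasurableSpace Ω := fun k =>
    (⨆ j : Fin n, ⨆ _ : (j : ℕ) < k, MeasurableSpace.comap (X j) inferInstance) ⊔
    (⨆ j : Fin n, ⨆ _ : (j : ℕ) < k, MeasurableSpace.comap (Y j) inferInstance) with hF_def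
  have hFle : ∀ k, F k ≤ ‹MeasurableSpace Ω› := by
    intro k
    refine sup_le (iSup_le fun j => iSup_le fun _ => (hXmeas j).comap_le)
      (iSup_le fun j => iSup_le fun _ => (hYmeas j).comap_le)
  have hXFmeas : ∀ (k : ℕ) (j : Fin n), (j : ℕ) < k → Measurable[F k] (X j) := by
    intro k j hj
    exact Measurable.of_comap_le
      (le_trans (le_iSup₂ (f := fun (j : Fin n) (_ : (j:ℕ) < k) =>
        MeasurableSpace.comap (X j) inferInstance) j hj) le_sup_left)
  have hYFmeas : ∀ (k : ℕ) (j : Fin n), (j : ℕ) < k → Measurable[F k] (Y j) := by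
    intro k j hj
    exact Measurable.of_comap_le
      (le_trans (le_iSup₂ (f := fun (j : Fin n) (_ : (j:ℕ) < k) =>
        MeasurableSpace.comap (Y j) inferInstance) j hj) le_sup_right)
  -- the running exponential
  set T : ℕ → Ω → ℝ := fun k ω =>
    ∑ j ∈ Finset.univ.filter (fun j : Fin n => (j : ℕ) < k), D j ω with hT_def
  set g : ℕ → Ω → ℝ := fun k ω => Real.exp (lam * T k ω) with hg_def
  have hTmeas : ∀ k, Measurable (T k) := by
    intro k
    exact Finset.measurable_sum _ fun j _ => hDmeas j
  have hgmeas : ∀ k, Measurable (g k) := fun k =>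
    Real.measurable_exp.comp ((hTmeas k).const_mul lam)
  have hgbdd : ∀ k, ∀ᵐ ω ∂μ, |g k ω| ≤ Real.exp (lam * (n * c)) := by
    intro k
    have hall : ∀ᵐ ω ∂μ, ∀ j, |D j ω| ≤ c := ae_all_iff.mpr hDbdd
    filter_upwards [hall] with ω hω
    rw [abs_of_pos (Real.exp_pos _), Real.exp_le_exp]
    refine mul_le_mul_of_nonneg_left ?_ hlam0.le
    calc T k ω ≤ |T k ω| := le_abs_self _
      _ ≤ ∑ j ∈ Finset.univ.filter (fun j : Fin n => (j : ℕ) < k), |D j ω| := by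
          rw [hT_def]; exact Finset.abs_sum_le_sum_abs _ _
      _ ≤ ∑ _j ∈ Finset.univ.filter (fun j : Fin n => (j : ℕ) < k), c :=
          Finset.sum_le_sum fun j _ => hω j
      _ ≤ n * c := by
          rw [Finset.sum_const, nsmul_eq_mul]
          refine mul_le_mul_of_nonneg_right ?_ hc0.le
          exact_mod_cast (Finset.card_filter_le _ _).trans_eq (by simp)
  have hgint : ∀ k, Integrable (g k) μ := fun k =>
    integrable_of_ae_bdd (hgmeas k).aestronglyMeasurable (hgbdd k)
  have hgpos : ∀ k ω, 0 < g k ω := fun k ω => Real.exp_pos _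
  have hgFmeas : ∀ k, StronglyMeasurable[F k] (g k) := by
    intro k
    refine Measurable.stronglyMeasurable ?_
    refine Measurable.exp (Measurable.const_mul ?_ lam)
    refine Finset.measurable_sum _ fun j hj => ?_
    have hjk : (j : ℕ) < k := (Finset.mem_filter.mp hj).2
    exact Measurable.sub (hXFmeas k j hjk) (hYFmeas k j hjk)
  -- per-step conditional bound
  have hstep : ∀ k : Fin n,
      μ[(fun ω => Real.exp (lam * D k ω)) | F (k : ℕ)] ≤ᵐ[μ] fun _ => K := by
    intro k
    -- σ-algebra inclusions
    have hGXle : ((⨆ (j : Fin n) (_ : j ≠ k), MeasurableSpace.comap (X j) inferInstance) ⊔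
        (⨆ j : Fin n, MeasurableSpace.comap (Y j) inferInstance)) ≤ ‹MeasurableSpace Ω› :=
      sup_le (iSup_le fun j => iSup_le fun _ => (hXmeas j).comap_le)
        (iSup_le fun j => (hYmeas j).comap_le)
    have hGYle : ((⨆ j : Fin n, MeasurableSpace.comap (X j) inferInstance) ⊔
        (⨆ (j : Fin n) (_ : j ≠ k), MeasurableSpace.comap (Y j) inferInstance)) ≤
        ‹MeasurableSpace Ω› :=
      sup_le (iSup_le fun j => (hXmeas j).comap_le)
        (iSup_le fun j => iSup_le fun _ => (hYmeas j).comap_le)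
    have hFX : F (k : ℕ) ≤
        (⨆ (j : Fin n) (_ : j ≠ k), MeasurableSpace.comap (X j) inferInstance) ⊔
        (⨆ j : Fin n, MeasurableSpace.comap (Y j) inferInstance) := by
      rw [hF_def]
      refine sup_le ?_ ?_
      · refine iSup_le fun j => iSup_le fun hj => ?_
        refine le_trans ?_ le_sup_left
        exact le_iSup₂ (f := fun (j : Fin n) (_ : j ≠ k) =>
          MeasurableSpace.comap (X j) inferInstance) j (Fin.ne_of_lt hj)
      · refine iSup_le fun j => iSup_le fun _ => ?_
        exact le_trans (le_iSup (fun j : Fin n => MeasurableSpace.comap (Y j) (inferInstance : MeasurableSpace ℝ)) j) le_sup_right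
    have hFY : F (k : ℕ) ≤
        (⨆ j : Fin n, MeasurableSpace.comap (X j) inferInstance) ⊔
        (⨆ (j : Fin n) (_ : j ≠ k), MeasurableSpace.comap (Y j) inferInstance) := by
      rw [hF_def]
      refine sup_le ?_ ?_
      · refine iSup_le fun j => iSup_le fun _ => ?_
        exact le_trans (le_iSup (fun j : Fin n => MeasurableSpace.comap (X j) (inferInstance : MeasurableSpace ℝ)) j) le_sup_left
      · refine iSup_le fun j => iSup_le fun hj => ?_
        refine le_trans ?_ le_sup_right
        exact le_iSup₂ (f := fun (j : Fin n) (_ : j ≠ k) =>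
          MeasurableSpace.comap (Y j) inferInstance) j (Fin.ne_of_lt hj)
    -- conditional means
    have hcondX : μ[X k | F (k : ℕ)] ≤ᵐ[μ] fun _ => α := by
      have h1 := (condExp_condExp_of_le hFX hGXle (f := X k) (μ := μ)).symm
      have h2 := condExp_mono (μ := μ) (m := F (k : ℕ))
        (integrable_condExp) (integrable_const α) (hXcond k)
      rw [condExp_const (hFle (k : ℕ)) α] at h2
      exact h1.trans_le h2
    have hcondY : μ[Y k | F (k : ℕ)] =ᵐ[μ] fun _ => β := by
      have h1 := (condExp_condExp_of_le hFY hGYle (f := Y k) (μ := μ)).symm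
      have h2 := condExp_congr_ae (m := F (k : ℕ)) (hYcond k)
      rw [condExp_const (hFle (k : ℕ)) β] at h2
      exact h1.trans (h2)
    have hcondD : μ[D k | F (k : ℕ)] ≤ᵐ[μ] fun _ => α - β := by
      have h1 : μ[D k | F (k : ℕ)] =ᵐ[μ] μ[X k | F (k : ℕ)] - μ[Y k | F (k : ℕ)] := by
        rw [hD_def]
        exact condExp_sub (hXint k) (hYint k) _
      filter_upwards [h1, hcondX, hcondY] with ω e1 e2 e3
      rw [e1, Pi.sub_apply, e3]
      exact sub_le_sub_right e2 β
    have hcondDlow : (fun _ => -c) ≤ᵐ[μ] μ[D k | F (k : ℕ)] := by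
      have h2 := condExp_mono (μ := μ) (m := F (k : ℕ))
        (integrable_const (-c)) (hDint k) ?_
      · rw [condExp_const (hFle (k : ℕ)) (-c)] at h2
        exact h2
      · filter_upwards [hDbdd k] with ω hω
        exact neg_le_of_abs_le hω
    -- chord bound
    have hchord : ∀ᵐ ω ∂μ, Real.exp (lam * D k ω) ≤
        Real.cosh r + Real.sinh r / c * D k ω := by
      filter_upwards [hDbdd k] with ω hω
      rw [abs_le] at hω
      have hw1 : (0:ℝ) ≤ (c - D k ω) / (2 * c) := by
        apply div_nonneg (by linarith [hω.2]) (by linarith)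
      have hw2 : (0:ℝ) ≤ (c + D k ω) / (2 * c) := by
        apply div_nonneg (by linarith [hω.1]) (by linarith)
      have hsum : (c - D k ω) / (2 * c) + (c + D k ω) / (2 * c) = 1 := by
        field_simp
        ring
      have hcvx := convexOn_exp.2 (Set.mem_univ (-r)) (Set.mem_univ r) hw1 hw2 hsum
      rw [smul_eq_mul, smul_eq_mul] at hcvx
      have harg : (c - D k ω) / (2 * c) * (-r) + (c + D k ω) / (2 * c) * r
          = lam * D k ω := by
        rw [hr_def, hlam_def]; field_simp; ring
      rw [harg] at hcvx
      refine hcvx.trans (le_of_eq ?_)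
      rw [Real.cosh_eq, Real.sinh_eq]
      simp only [smul_eq_mul]; field_simp
      ring
    -- conditional chord bound
    have hh_int : Integrable (fun ω => Real.cosh r + Real.sinh r / c * D k ω) μ := by
      exact (integrable_const (Real.cosh r)).add (((hDint k).const_mul _))
    have hfun : (fun ω => Real.cosh r + Real.sinh r / c * D k ω)
        = (fun _ : Ω => Real.cosh r) + (Real.sinh r / c) • (D k) := by
      funext ω; simp [smul_eq_mul]
    have hlin : μ[(fun ω => Real.cosh r + Real.sinh r / c * D k ω) | F (k : ℕ)]
        =ᵐ[μ] fun ω => Real.cosh r + Real.sinh r / c * (μ[D k | F (k : ℕ)]) ω := by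
      rw [hfun]
      have h1 := condExp_add (μ := μ) (m := F (k : ℕ))
        (integrable_const (Real.cosh r)) (((hDint k).smul (Real.sinh r / c)))
      have h2 := condExp_smul (μ := μ) (m := F (k : ℕ)) (Real.sinh r / c) (D k)
      rw [condExp_const (hFle (k : ℕ))] at h1
      filter_upwards [h1, h2] with ω e1 e2
      rw [e1, Pi.add_apply, e2]
      simp [smul_eq_mul]
    have hmono1 := condExp_mono (μ := μ) (m := F (k : ℕ))
      (hexpDint k) hh_int hchord
    have hconst : ∀ᵐ ω ∂μ,
        Real.cosh r + Real.sinh r / c * (μ[D k | F (k : ℕ)]) ω ≤ K := by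
      filter_upwards [hcondD] with ω hω
      have hs : 0 ≤ Real.sinh r / c := div_nonneg (Real.sinh_nonneg_iff.mpr hr0.le) hc0.le
      have h1 : Real.cosh r + Real.sinh r / c * (μ[D k | F (k : ℕ)]) ω ≤
          Real.cosh r + Real.sinh r / c * (α - β) := by
        exact add_le_add_right (mul_le_mul_of_nonneg_left hω hs) _
      refine h1.trans ?_
      have heq : Real.cosh r + Real.sinh r / c * (α - β) = Real.cosh r - r * Real.sinh r := by
        rw [hr_def, hδ_def]; field_simp; ring
      rw [heq]
      have hcs : Real.cosh r - r * Real.sinh r ≤ 1 - r ^ 2 / 2 := by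
        have := chord_scalar r hr0.le
        rw [Real.cosh_eq, Real.sinh_eq]
        nlinarith [this]
      refine hcs.trans ?_
      rw [hK_def]
      have := Real.add_one_le_exp (-(1/2) * r ^ 2)
      linarith
    calc μ[(fun ω => Real.exp (lam * D k ω)) | F (k : ℕ)]
        ≤ᵐ[μ] μ[(fun ω => Real.cosh r + Real.sinh r / c * D k ω) | F (k : ℕ)] := hmono1
      _ ≤ᵐ[μ] fun _ => K := by
          filter_upwards [hlin, hconst] with ω e1 e2
          rw [e1]; exact e2
  -- induction
  have main : ∀ k, k ≤ n → ∫ ω, g k ω ∂μ ≤ K ^ k := by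
    intro k
    induction k with
    | zero =>
      intro _
      have : g 0 = fun _ => 1 := by
        funext ω
        rw [hg_def, hT_def]
        simp
      rw [this]
      simp
    | succ k ih =>
      intro hk1
      have hk : k < n := hk1
      set kk : Fin n := ⟨k, hk⟩ with hkk_def
      have hsplit : g (k+1) = fun ω => g k ω * Real.exp (lam * D kk ω) := by
        funext ω
        rw [hg_def, hT_def]
        simp only
        have hins : Finset.univ.filter (fun j : Fin n => (j : ℕ) < k + 1)
            = insert kk (Finset.univ.filter (fun j : Fin n => (j : ℕ) < k)) := by
          ext j
          simp [Nat.lt_succ_iff_lt_or_eq, Fin.ext_iff, hkk_def, or_comm, le_iff_eq_or_lt]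
        rw [hins, Finset.sum_insert (by simp [hkk_def]), mul_add, Real.exp_add]
        ring
      have hprod_int : Integrable (fun ω => g k ω * Real.exp (lam * D kk ω)) μ := by
        refine integrable_of_ae_bdd
          (((hgmeas k).mul (hexpDmeas kk)).aestronglyMeasurable)
          (C := Real.exp (lam * (n * c)) * Real.exp (lam * c)) ?_
        filter_upwards [hgbdd k, hexpDbdd kk] with ω h1 h2
        rw [abs_mul]
        exact mul_le_mul h1 h2 (abs_nonneg _) (Real.exp_pos _).le
      have hcexp := condExp_mul_of_stronglyMeasurable_left (μ := μ) (m := F k)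
        (hgFmeas k) (by exact hprod_int) (hexpDint kk)
      have hint_left : Integrable (fun ω => g k ω *
          (μ[(fun ω => Real.exp (lam * D kk ω)) | F k]) ω) μ := by
        refine (integrable_condExp (m := F k)
          (f := g k * fun ω => Real.exp (lam * D kk ω))).congr ?_
        filter_upwards [hcexp] with ω hω
        simpa using hω
      calc ∫ ω, g (k+1) ω ∂μ = ∫ ω, g k ω * Real.exp (lam * D kk ω) ∂μ := by rw [hsplit]
        _ = ∫ ω, (μ[(fun ω => g k ω * Real.exp (lam * D kk ω)) | F k]) ω ∂μ :=
            (integral_condExp (hFle k)).symm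
        _ = ∫ ω, g k ω * (μ[(fun ω => Real.exp (lam * D kk ω)) | F k]) ω ∂μ := by
            refine integral_congr_ae ?_
            filter_upwards [hcexp] with ω hω
            exact hω
        _ ≤ ∫ ω, g k ω * K ∂μ := by
            refine integral_mono_ae hint_left ((hgint k).mul_const K) ?_
            filter_upwards [hstep kk] with ω hω
            exact mul_le_mul_of_nonneg_left hω (hgpos k ω).le
        _ = (∫ ω, g k ω ∂μ) * K := integral_mul_const K (g k)
        _ ≤ K ^ k * K := by
            exact mul_le_mul_of_nonneg_right (ih (le_of_lt hk)) hK0.le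
        _ = K ^ (k+1) := by ring
  -- conclusion
  have hSmeas : MeasurableSet {ω | 0 ≤ (∑ k, X k ω) - ∑ k, Y k ω} := by
    apply measurableSet_le measurable_const
    exact (Finset.measurable_sum _ fun j _ => hXmeas j).sub
      (Finset.measurable_sum _ fun j _ => hYmeas j)
  have hTn : ∀ ω, T n ω = (∑ k, X k ω) - ∑ k, Y k ω := by
    intro ω
    rw [hT_def]
    simp only
    rw [Finset.filter_true_of_mem (fun j _ => j.isLt), hD_def]
    simp [Finset.sum_sub_distrib]
  have hind : ∀ ω, Set.indicator {ω | 0 ≤ (∑ k, X k ω) - ∑ k, Y k ω}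
      (1 : Ω → ℝ) ω ≤ g n ω := by
    intro ω
    by_cases hω : ω ∈ {ω | 0 ≤ (∑ k, X k ω) - ∑ k, Y k ω}
    · rw [Set.indicator_of_mem hω]
      simp only [Pi.one_apply]
      rw [hg_def]
      simp only
      rw [← Real.exp_zero]
      refine Real.exp_le_exp.mpr ?_
      rw [hTn ω]
      exact mul_nonneg hlam0.le hω
    · rw [Set.indicator_of_notMem hω]
      exact (hgpos n ω).le
  calc (μ {ω | 0 ≤ (∑ k, X k ω) - ∑ k, Y k ω}).toReal
      = ∫ ω, Set.indicator {ω | 0 ≤ (∑ k, X k ω) - ∑ k, Y k ω} (1 : Ω → ℝ) ω ∂μ := by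
        rw [integral_indicator_one hSmeas]; rfl
    _ ≤ ∫ ω, g n ω ∂μ := by
        refine integral_mono ((integrable_const (1:ℝ)).indicator hSmeas) (hgint n) hind
    _ ≤ K ^ n := main n le_rfl
    _ = Real.exp (-(1 / 2) * r ^ 2 * n) := by
        rw [hK_def, ← Real.exp_nat_mul]
        congr 1
        ring
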